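/- Let δ ∈ (-∞,0) and let n ≥ 1 be an integer. Define ρ_n(δ,t) := ((1-t)^δ − ∑_{k=0}^{n-1} ((-δ)_k / k!) t^k) / t^n for t ∈ (0,1) and ρ_n(δ,0) := (-δ)_n / n!. Then the infimum of ρ_n(δ,t) over t ∈ [0,1) equals (-δ)_n / n!, and ρ_n(δ,·) is unbounded above on [0,1). -/

import Mathlib

open MeasureTheory Real Filter

/-- The Pochhammer symbol `(a)_k = a (a+1) ⋯ (a+k-1)`, with `(a)_0 = 1`. -/
noncomputable def poch (a : ℝ) : ℕ → ℝ
  | 0 => 1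
  | k + 1 => poch a k * (a + k)

lemma poch_pos {a : ℝ} (ha : 0 < a) : ∀ k, 0 < poch a k
  | 0 => one_pos
  | k + 1 => mul_pos (poch_pos ha k) (by positivity)

lemma poch_succ_left (a : ℝ) : ∀ k, poch a (k + 1) = a * poch (a + 1) k
  | 0 => by simp [poch]
  | k + 1 => by
    show poch a (k + 1) * (a + (k+1 : ℕ)) = a * (poch (a+1) k * ((a+1) + k))
    rw [poch_succ_left a k]
    push_cast
    ring

lemma key : ∀ (n : ℕ) (δ : ℝ), δ < 0 → ∀ t ∈ Set.Ico (0:ℝ) 1,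
    ∑ k ∈ Finset.range n, poch (-δ) k / (k.factorial : ℝ) * t ^ k ≤ (1 - t) ^ δ := by
  intro n
  induction n with
  | zero =>
    intro δ hδ t ht
    simp only [Finset.range_zero, Finset.sum_empty]
    exact (Real.rpow_pos_of_pos (by linarith [ht.2]) δ).le
  | succ n ih =>
    intro δ hδ t ht
    obtain ⟨ht0, ht1⟩ := ht
    set g : ℝ → ℝ := fun x =>
      (1 - x) ^ δ - ∑ k ∈ Finset.range (n+1), poch (-δ) k / (k.factorial : ℝ) * x ^ k with hg
    have hderiv : ∀ x ∈ Set.Ico (0:ℝ) 1, HasDerivAt g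
        ((-δ) * ((1 - x) ^ (δ - 1) -
          ∑ k ∈ Finset.range n, poch (-(δ-1)) k / (k.factorial : ℝ) * x ^ k)) x := by
      intro x hx
      have hx1 : (0:ℝ) < 1 - x := by linarith [hx.2]
      have h1 : HasDerivAt (fun x : ℝ => (1 - x) ^ δ)
          ((-1) * δ * (1 - x) ^ (δ - 1)) x :=
        ((hasDerivAt_id x).const_sub 1).rpow_const (Or.inl hx1.ne')
      have h2 : HasDerivAt
          (fun x : ℝ => ∑ k ∈ Finset.range (n+1), poch (-δ) k / (k.factorial : ℝ) * x ^ k)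
          (∑ k ∈ Finset.range (n+1), poch (-δ) k / (k.factorial : ℝ) * (k * x ^ (k-1))) x := by
        apply HasDerivAt.fun_sum
        intro k _
        exact (hasDerivAt_pow k x).const_mul _
      have hd := h1.sub h2
      have hre : ∀ j ∈ Finset.range n,
          poch (-δ) (j+1) / (((j+1).factorial : ℕ) : ℝ) * ((((j+1 : ℕ)) : ℝ) * x ^ (j+1-1))
            = (-δ) * (poch (-(δ-1)) j / (j.factorial : ℝ) * x ^ j) := by
        intro j _
        have h3 : -(δ - 1) = -δ + 1 := by ring
        rw [h3, poch_succ_left, Nat.factorial_succ]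
        have hf : ((j.factorial : ℝ)) ≠ 0 := Nat.cast_ne_zero.mpr j.factorial_ne_zero
        have hj1 : ((j:ℝ) + 1) ≠ 0 := by positivity
        push_cast
        field_simp
      have heq : (-δ) * ((1 - x) ^ (δ - 1) -
            ∑ k ∈ Finset.range n, poch (-(δ-1)) k / (k.factorial : ℝ) * x ^ k)
          = -1 * δ * (1 - x) ^ (δ - 1) -
            ∑ k ∈ Finset.range (n+1), poch (-δ) k / (k.factorial : ℝ) * ((k:ℝ) * x ^ (k-1)) := by
        rw [Finset.sum_range_succ', Finset.sum_congr rfl hre, ← Finset.mul_sum]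
        simp only [Nat.cast_zero, zero_mul, mul_zero, add_zero, poch]
        ring
      rw [heq]
      exact hd
    have hmono : MonotoneOn g (Set.Icc 0 t) := by
      apply monotoneOn_of_deriv_nonneg (convex_Icc 0 t)
      · intro x hx
        exact (hderiv x ⟨hx.1, lt_of_le_of_lt hx.2 ht1⟩).continuousAt.continuousWithinAt
      · rw [interior_Icc]
        intro x hx
        exact (hderiv x ⟨hx.1.le, hx.2.trans ht1⟩).differentiableAt.differentiableWithinAt
      · rw [interior_Icc]
        intro x hx
        have hxm : x ∈ Set.Ico (0:ℝ) 1 := ⟨hx.1.le, hx.2.trans ht1⟩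
        rw [(hderiv x hxm).deriv]
        have := ih (δ - 1) (by linarith) x hxm
        have hδ' : (0:ℝ) ≤ -δ := by linarith
        apply mul_nonneg hδ'
        have h3 : -(δ - 1) = -δ + 1 := by ring
        rw [h3] at this ⊢
        linarith
    have hg0 : g 0 = 0 := by
      simp only [hg]
      rw [Finset.sum_range_succ']
      simp [poch, Real.one_rpow]
    have h01 : g 0 ≤ g t := hmono ⟨le_refl 0, ht0⟩ ⟨ht0, le_refl t⟩ ht0
    rw [hg0] at h01
    simpa [hg, sub_nonneg] using h01

theorem taylor_remainder_inf_unbounded_neg_delta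
    (δ : ℝ) (hδ : δ < 0) (n : ℕ) (hn : 1 ≤ n) :
    let ρ : ℝ → ℝ := fun t =>
      if t = 0 then poch (-δ) n / (n.factorial : ℝ)
      else ((1 - t) ^ δ -
        ∑ k ∈ Finset.range n, poch (-δ) k / (k.factorial : ℝ) * t ^ k) / t ^ n
    sInf (ρ '' Set.Ico 0 1) = poch (-δ) n / (n.factorial : ℝ) ∧
    ¬ BddAbove (ρ '' Set.Ico 0 1) := by
  intro ρ
  have hδ' : (0:ℝ) < -δ := by linarith
  have hρ0 : ρ 0 = poch (-δ) n / (n.factorial : ℝ) := by simp [ρ]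
  have hρ_ge : ∀ t ∈ Set.Ico (0:ℝ) 1, poch (-δ) n / (n.factorial : ℝ) ≤ ρ t := by
    intro t ht
    by_cases h0 : t = 0
    · subst h0; rw [hρ0]
    · have ht0 : 0 < t := lt_of_le_of_ne ht.1 (Ne.symm h0)
      simp only [ρ, if_neg h0]
      rw [le_div_iff₀ (pow_pos ht0 n)]
      have hk := key (n+1) δ hδ t ht
      rw [Finset.sum_range_succ] at hk
      linarith
  constructor
  · apply IsLeast.csInf_eq
    constructor
    · exact ⟨0, ⟨le_refl 0, one_pos⟩, hρ0⟩
    · rintro _ ⟨t, ht, rfl⟩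
      exact hρ_ge t ht
  · rintro ⟨M, hM⟩
    set B := ∑ k ∈ Finset.range n, poch (-δ) k / (k.factorial : ℝ) with hB
    have hBpos : 1 ≤ B := by
      rw [hB]
      calc (1:ℝ) = ∑ k ∈ Finset.range 1, poch (-δ) k / (k.factorial : ℝ) := by simp [poch]
      _ ≤ B := by
        apply Finset.sum_le_sum_of_subset_of_nonneg
        · exact Finset.range_subset_range.mpr hn
        · intro k _ _
          exact div_nonneg (poch_pos hδ' k).le (Nat.cast_nonneg _)
    have hSB : ∀ t ∈ Set.Ico (0:ℝ) 1,
        ∑ k ∈ Finset.range n, poch (-δ) k / (k.factorial : ℝ) * t ^ k ≤ B := by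
      intro t ht
      rw [hB]
      apply Finset.sum_le_sum
      intro k _
      have : t ^ k ≤ 1 := pow_le_one₀ ht.1 ht.2.le
      nlinarith [div_nonneg (poch_pos hδ' k).le (Nat.cast_nonneg (k.factorial) : (0:ℝ) ≤ k.factorial)]
    set C := max M 0 + B + 1 with hC
    have hC1 : 1 < C := by
      have := le_max_right M (0:ℝ); linarith
    set ε := C ^ (1/δ) with hε
    have hε0 : 0 < ε := Real.rpow_pos_of_pos (by linarith) _
    have hε1 : ε < 1 :=
      Real.rpow_lt_one_of_one_lt_of_neg hC1 (by
        apply div_neg_of_pos_of_neg one_pos hδ)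
    set t := 1 - ε with htdef
    have htmem : t ∈ Set.Ico (0:ℝ) 1 := ⟨by linarith, by linarith⟩
    have ht0 : 0 < t := by linarith
    have hεδ : (1 - t) ^ δ = C := by
      have : (1:ℝ) - t = ε := by ring
      rw [this, hε, ← Real.rpow_mul (by linarith : (0:ℝ) ≤ C)]
      rw [one_div, inv_mul_cancel₀ (ne_of_lt hδ), Real.rpow_one]
    have hMt := hM ⟨t, htmem, rfl⟩
    have hρt : ρ t = ((1 - t) ^ δ -
        ∑ k ∈ Finset.range n, poch (-δ) k / (k.factorial : ℝ) * t ^ k) / t ^ n := by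
      simp [ρ, ht0.ne']
    have hnum : C - B ≤ (1 - t) ^ δ -
        ∑ k ∈ Finset.range n, poch (-δ) k / (k.factorial : ℝ) * t ^ k := by
      rw [hεδ]
      linarith [hSB t htmem]
    have htn : t ^ n ≤ 1 := pow_le_one₀ ht0.le htmem.2.le
    have htnpos : 0 < t ^ n := pow_pos ht0 n
    have hfin : C - B ≤ ρ t := by
      rw [hρt, le_div_iff₀ htnpos]
      have hCB : (0:ℝ) ≤ C - B := by
        have := le_max_right M (0:ℝ); linarith
      nlinarith
    have : C - B ≤ M := le_trans hfin hMt
    have := le_max_left M (0:ℝ)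
    linarith
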